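/- Let (R, Ad_Γ) be a central graded von Neumann algebra such that R is of type I_n (n a cardinal) and R is not a factor. Then the even part R^(0) is a factor of type I_n, and every abelian projection of R^(0) is abelian in R. -/

import Mathlib

noncomputable section

variable {H : Type*} [NormedAddCommGroup H] [InnerProductSpace ℂ H] [CompleteSpace H]

/-- A self-adjoint unitary operator. -/
def IsSAU (Γ : H →L[ℂ] H) : Prop := star Γ = Γ ∧ Γ * Γ = 1

/-- The even part of a graded set of operators. -/
def evenPart (R : Set (H →L[ℂ] H)) (Γ : H →L[ℂ] H) : Set (H →L[ℂ] H) :=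
  {x | x ∈ R ∧ Γ * x * Γ = x}

/-- The odd part of a graded set of operators. -/
def oddPart (R : Set (H →L[ℂ] H)) (Γ : H →L[ℂ] H) : Set (H →L[ℂ] H) :=
  {x | x ∈ R ∧ Γ * x * Γ = -x}

/-- The center of a set of operators. -/
def centerSet (R : Set (H →L[ℂ] H)) : Set (H →L[ℂ] H) :=
  {x | x ∈ R ∧ ∀ y ∈ R, x * y = y * x}

/-- An (orthogonal) projection operator. -/
def IsProjOp (e : H →L[ℂ] H) : Prop := e * e = e ∧ star e = e

/-- `e` is a subprojection of `f`. -/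
def SubProj (e f : H →L[ℂ] H) : Prop := e * f = e ∧ f * e = e

/-- Murray–von Neumann equivalence of projections relative to `M`. -/
def MvNEquiv (M : Set (H →L[ℂ] H)) (e f : H →L[ℂ] H) : Prop :=
  ∃ v ∈ M, star v * v = e ∧ v * star v = f

/-- `e` is finite relative to `M`. -/
def FiniteProj (M : Set (H →L[ℂ] H)) (e : H →L[ℂ] H) : Prop :=
  ∀ f ∈ M, IsProjOp f → SubProj f e → MvNEquiv M f e → f = e

/-- `e` is an abelian projection relative to `M`: the corner `eMe` is commutative. -/
def AbelianProj (M : Set (H →L[ℂ] H)) (e : H →L[ℂ] H) : Prop :=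
  ∀ x ∈ M, ∀ y ∈ M, (e * x * e) * (e * y * e) = (e * y * e) * (e * x * e)

/-- A von Neumann algebra (given as a set) is of type III: no nonzero finite projections. -/
def TypeIII (M : Set (H →L[ℂ] H)) : Prop :=
  ∀ e ∈ M, IsProjOp e → FiniteProj M e → e = 0

/-- Type II₁ : finite with no nonzero abelian projections. -/
def TypeII1 (M : Set (H →L[ℂ] H)) : Prop :=
  FiniteProj M 1 ∧ ∀ e ∈ M, IsProjOp e → AbelianProj M e → e = 0

/-- Type I_n : the identity is the sum of `n` orthogonal, mutually equivalent
abelian projections. -/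
def TypeI (M : Set (H →L[ℂ] H)) (n : Cardinal) : Prop :=
  ∃ (ι : Type) (E : ι → H →L[ℂ] H), Cardinal.mk ι = n ∧
    (∀ a, E a ∈ M ∧ IsProjOp (E a) ∧ AbelianProj M (E a)) ∧
    (Pairwise fun a b => E a * E b = 0) ∧
    (∀ a b, MvNEquiv M (E a) (E b)) ∧
    (∀ v : H, HasSum (fun a => (E a) v) v)

/-- The scalar operators. -/
def scalarOps (H : Type*) [NormedAddCommGroup H] [InnerProductSpace ℂ H] [CompleteSpace H] :
    Set (H →L[ℂ] H) := Set.range fun c : ℂ => c • (1 : H →L[ℂ] H)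

/-- `M` is a factor. -/
def IsFactor (M : Set (H →L[ℂ] H)) : Prop := centerSet M = scalarOps H

/-- `R` is graded by the self-adjoint unitary `Γ`. -/
def GradedBy (R : Set (H →L[ℂ] H)) (Γ : H →L[ℂ] H) : Prop :=
  IsSAU Γ ∧ ∀ x ∈ R, Γ * x * Γ ∈ R

/-- The von Neumann algebra generated by a (star-closed, unital) set:
its double commutant. -/
def genVN (S : Set (H →L[ℂ] H)) : Set (H →L[ℂ] H) :=
  Set.centralizer (Set.centralizer S)

/-- `c` is the central support of `T` in `M`. -/
def IsCentralSupport (M : Set (H →L[ℂ] H)) (T c : H →L[ℂ] H) : Prop :=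
  c ∈ centerSet M ∧ IsProjOp c ∧ c * T = T ∧
    ∀ d ∈ centerSet M, IsProjOp d → d * T = T → c * d = c

set_option linter.unusedSectionVars false
set_option linter.unusedVariables false
set_option linter.unusedTactic false

namespace Stmt16Aux
variable {Γ : H →L[ℂ] H}

theorem conj_conj (h2 : Γ * Γ = 1) (a : H →L[ℂ] H) : Γ * (Γ * a * Γ) * Γ = a := by
  have : Γ * (Γ * a * Γ) * Γ = (Γ * Γ) * a * (Γ * Γ) := by noncomm_ring
  rw [this, h2, one_mul, mul_one]

theorem conj_mul' (h2 : Γ * Γ = 1) (a b : H →L[ℂ] H) :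
    (Γ * a * Γ) * (Γ * b * Γ) = Γ * (a * b) * Γ := by
  have : (Γ * a * Γ) * (Γ * b * Γ) = Γ * (a * (Γ * Γ) * b) * Γ := by noncomm_ring
  rw [this, h2, mul_one]

theorem conj_star (hs : star Γ = Γ) (a : H →L[ℂ] H) :
    star (Γ * a * Γ) = Γ * star a * Γ := by
  simp [star_mul, hs, mul_assoc]

theorem conj_smul (c : ℂ) (a : H →L[ℂ] H) : Γ * (c • a) * Γ = c • (Γ * a * Γ) := by
  rw [mul_smul_comm, smul_mul_assoc]

theorem conj_one (h2 : Γ * Γ = 1) : Γ * 1 * Γ = 1 := by rw [mul_one, h2]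

theorem smul_one_mem (R : VonNeumannAlgebra H) (c : ℂ) : c • (1 : H →L[ℂ] H) ∈ R := by
  rw [← Algebra.algebraMap_eq_smul_one]
  exact R.algebraMap_mem c

theorem vn_smul_mem (R : VonNeumannAlgebra H) {x : H →L[ℂ] H} (c : ℂ) (hx : x ∈ R) :
    c • x ∈ R := by
  rw [show c • x = (c • (1 : H →L[ℂ] H)) * x by simp [smul_mul_assoc]]
  exact mul_mem (smul_one_mem R c) hx

theorem scalar_subset_center (R : VonNeumannAlgebra H) :
    scalarOps H ⊆ centerSet (R : Set (H →L[ℂ] H)) := by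
  rintro x ⟨c, rfl⟩
  exact ⟨smul_one_mem R c, fun y _ => by simp [smul_mul_assoc, mul_smul_comm]⟩

/-- existence of an odd self-adjoint central unitary -/
theorem exists_odd_sau (R : VonNeumannAlgebra H) (Γ : H →L[ℂ] H)
    (hs : star Γ = Γ) (h2 : Γ * Γ = 1)
    (hinv : ∀ x ∈ R, Γ * x * Γ ∈ R)
    (hcentral : centerSet (R : Set (H →L[ℂ] H)) ∩
      evenPart (R : Set (H →L[ℂ] H)) Γ = scalarOps H)
    (hnf : ¬ IsFactor (R : Set (H →L[ℂ] H))) :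
    ∃ u : H →L[ℂ] H, u ∈ R ∧ star u = u ∧ u * u = 1 ∧ Γ * u * Γ = -u ∧
      ∀ y ∈ R, u * y = y * u := by
  classical
  -- a central element outside the scalars
  have hsub := scalar_subset_center R
  have hex : ∃ z ∈ centerSet (R : Set (H →L[ℂ] H)), z ∉ scalarOps H := by
    by_contra h
    push_neg at h
    exact hnf (Set.Subset.antisymm h hsub)
  obtain ⟨z, hz, hzs⟩ := hex
  -- conjugate of a central element is central
  have hZconj : ∀ x ∈ centerSet (R : Set (H →L[ℂ] H)),
      Γ * x * Γ ∈ centerSet (R : Set (H →L[ℂ] H)) := by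
    rintro x ⟨hxR, hxc⟩
    refine ⟨hinv x hxR, fun y hy => ?_⟩
    conv_lhs => rw [← conj_conj h2 y]
    conv_rhs => rw [← conj_conj h2 y]
    rw [conj_mul' h2, conj_mul' h2, hxc _ (hinv y hy)]
  -- star of a central element is central
  have hZstar : ∀ x ∈ centerSet (R : Set (H →L[ℂ] H)),
      star x ∈ centerSet (R : Set (H →L[ℂ] H)) := by
    rintro x ⟨hxR, hxc⟩
    refine ⟨star_mem hxR, fun y hy => ?_⟩
    have := congrArg star (hxc (star y) (star_mem hy))
    simpa [star_mul] using this.symm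
  have hZmul : ∀ x ∈ centerSet (R : Set (H →L[ℂ] H)), ∀ y ∈ centerSet (R : Set (H →L[ℂ] H)),
      x * y ∈ centerSet (R : Set (H →L[ℂ] H)) := by
    rintro x ⟨hxR, hxc⟩ y ⟨hyR, hyc⟩
    refine ⟨mul_mem hxR hyR, fun t ht => ?_⟩
    rw [mul_assoc, hyc t ht, ← mul_assoc, hxc t ht, mul_assoc]
  -- even part of z is scalar
  set z₀ : H →L[ℂ] H := (2⁻¹ : ℂ) • (z + Γ * z * Γ) with hz₀def
  have hz₀c : z₀ ∈ centerSet (R : Set (H →L[ℂ] H)) := by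
    obtain ⟨hzR, hzc⟩ := hz
    obtain ⟨hzR', hzc'⟩ := hZconj z ⟨hzR, hzc⟩
    refine ⟨?_, fun y hy => ?_⟩
    · exact vn_smul_mem R _ (add_mem hzR hzR')
    · rw [smul_mul_assoc, mul_smul_comm, add_mul, mul_add, hzc y hy, hzc' y hy]
  have hz₀e : Γ * z₀ * Γ = z₀ := by
    rw [hz₀def, conj_smul, mul_add, add_mul, conj_conj h2]
    rw [show Γ * z * Γ + z = z + Γ * z * Γ by abel]
  have hz₀s : z₀ ∈ scalarOps H := by
    rw [← hcentral]; exact ⟨hz₀c, hz₀c.1, hz₀e⟩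
  -- odd part of z
  set z₁ : H →L[ℂ] H := z - z₀ with hz₁def
  have hz₁c : z₁ ∈ centerSet (R : Set (H →L[ℂ] H)) := by
    refine ⟨sub_mem hz.1 hz₀c.1, fun y hy => ?_⟩
    rw [sub_mul, mul_sub, hz.2 y hy, hz₀c.2 y hy]
  have hz₁o : Γ * z₁ * Γ = -z₁ := by
    have hzz : Γ * z * Γ = (2 : ℂ) • z₀ - z := by
      rw [hz₀def, smul_smul]; norm_num
    rw [hz₁def, mul_sub, sub_mul, hzz, hz₀e]
    rw [show (2:ℂ) • z₀ - z - z₀ = -(z - z₀) by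
      rw [two_smul]; abel]
  have hz₁ne : z₁ ≠ 0 := by
    intro h
    apply hzs
    have : z = z₀ := by rwa [hz₁def, sub_eq_zero] at h
    rw [this]; exact hz₀s
  -- a nonzero self-adjoint odd central element
  have hstarz₁o : Γ * star z₁ * Γ = -(star z₁) := by
    rw [← conj_star hs, hz₁o, star_neg]
  have hstarz₁c := hZstar z₁ hz₁c
  have hw : ∃ w : H →L[ℂ] H, w ≠ 0 ∧ star w = w ∧ Γ * w * Γ = -w ∧
      w ∈ centerSet (R : Set (H →L[ℂ] H)) := by
    by_cases h1 : z₁ + star z₁ = 0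
    · refine ⟨Complex.I • (z₁ - star z₁), ?_, ?_, ?_, ?_⟩
      · intro h
        rcases smul_eq_zero.mp h with h' | h'
        · exact Complex.I_ne_zero h'
        · rw [sub_eq_zero] at h'
          have : (2 : ℂ) • z₁ = 0 := by
            rw [two_smul]
            nth_rewrite 2 [h']
            rw [show z₁ + star z₁ = 0 from h1]
          exact hz₁ne (by simpa using smul_eq_zero.mp this)
      · rw [star_smul, star_sub, star_star, Complex.star_def, Complex.conj_I]
        module
      · rw [conj_smul, mul_sub, sub_mul, hz₁o, hstarz₁o, hz₁def]
        module
      · refine ⟨vn_smul_mem R _ (sub_mem hz₁c.1 hstarz₁c.1), fun y hy => ?_⟩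
        rw [smul_mul_assoc, mul_smul_comm, sub_mul, mul_sub, hz₁c.2 y hy, hstarz₁c.2 y hy]
    · refine ⟨z₁ + star z₁, h1, ?_, ?_, ?_⟩
      · rw [star_add, star_star, add_comm]
      · rw [mul_add, add_mul, hz₁o, hstarz₁o, neg_add]
      · refine ⟨add_mem hz₁c.1 hstarz₁c.1, fun y hy => ?_⟩
        rw [add_mul, mul_add, hz₁c.2 y hy, hstarz₁c.2 y hy]
  obtain ⟨w, hwne, hws, hwo, hwc⟩ := hw
  -- w * w is an even central element, hence a scalar
  have hwwc : w * w ∈ centerSet (R : Set (H →L[ℂ] H)) := hZmul w hwc w hwc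
  have hwwe : Γ * (w * w) * Γ = w * w := by
    rw [← conj_mul' h2, hwo, neg_mul_neg]
  have hwws : w * w ∈ scalarOps H := by
    rw [← hcentral]; exact ⟨hwwc, hwwc.1, hwwe⟩
  obtain ⟨c, hc⟩ := hwws
  have hc' : c • (1 : H →L[ℂ] H) = w * w := hc
  -- find a vector not killed by w
  have hv : ∃ v : H, w v ≠ 0 := by
    by_contra h
    push_neg at h
    exact hwne (ContinuousLinearMap.ext fun v => by simp [h v])
  obtain ⟨v, hv⟩ := hv
  have hvne : v ≠ 0 := fun h => hv (by simp [h])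
  -- compute c
  have hinner : c * (‖v‖ : ℂ)^2 = (‖w v‖ : ℂ)^2 := by
    have h1 : inner ℂ v ((c • (1 : H →L[ℂ] H)) v) = (c * (‖v‖:ℂ)^2 : ℂ) := by
      simp [inner_smul_right, inner_self_eq_norm_sq_to_K]
    have h2' : (inner ℂ v ((w * w) v) : ℂ) = (‖w v‖ : ℂ)^2 := by
      have : (w * w) v = w (w v) := rfl
      rw [this, ← ContinuousLinearMap.adjoint_inner_left,
        ← ContinuousLinearMap.star_eq_adjoint, hws, inner_self_eq_norm_sq_to_K]
      norm_cast
    rw [← h1, ← h2', hc']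
  have hcr : c = ((‖w v‖^2 / ‖v‖^2 : ℝ) : ℂ) := by
    have hnv : (‖v‖ : ℂ)^2 ≠ 0 := by
      simp [pow_eq_zero_iff, hvne]
    field_simp at hinner ⊢
    push_cast
    have hv0 : (‖v‖ : ℂ) ≠ 0 := by exact_mod_cast norm_ne_zero_iff.mpr hvne
    rw [← hinner]
    field_simp
  set r : ℝ := ‖w v‖^2 / ‖v‖^2 with hrdef
  have hrpos : 0 < r := by
    exact div_pos (pow_pos (norm_pos_iff.mpr hv) 2) (pow_pos (norm_pos_iff.mpr hvne) 2)
  set t : ℝ := (Real.sqrt r)⁻¹ with htdef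
  have htt : t * t * r = 1 := by
    rw [htdef, ← mul_inv, Real.mul_self_sqrt hrpos.le]
    field_simp
  refine ⟨(t : ℂ) • w, vn_smul_mem R _ hwc.1, ?_, ?_, ?_, fun y hy => ?_⟩
  · rw [star_smul, hws, Complex.star_def, Complex.conj_ofReal]
  · rw [smul_mul_smul_comm, ← hc', hcr, smul_smul,
      show ((t:ℂ)) * t * r = ((t*t*r : ℝ) : ℂ) by push_cast; ring, htt]
    simp
  · rw [conj_smul, hwo, smul_neg]
  · rw [smul_mul_assoc, mul_smul_comm, hwc.2 y hy]

/-- generic block commutation -/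
theorem block_comm {S : Type*} [Ring S] (A B C D u : S) (hu2 : u * u = 1)
    (hAu : u * A = A * u) (hBu : u * B = B * u) (hCu : u * C = C * u) (hDu : u * D = D * u)
    (hAC : A * C = C * A) (hAD : A * D = D * A) (hBC : B * C = C * B) (hBD : B * D = D * B) :
    (A + B * u) * (C + D * u) = (C + D * u) * (A + B * u) := by
  have k1 : (B * u) * C = (B * C) * u := by rw [mul_assoc, hCu, ← mul_assoc]
  have k2 : (B * u) * (D * u) = B * D := by
    rw [show (B * u) * (D * u) = B * ((u * D) * u) by noncomm_ring, hDu,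
      show B * ((D * u) * u) = B * (D * (u * u)) by noncomm_ring, hu2, mul_one]
  have k3 : (D * u) * A = (D * A) * u := by rw [mul_assoc, hAu, ← mul_assoc]
  have k4 : (D * u) * (B * u) = D * B := by
    rw [show (D * u) * (B * u) = D * ((u * B) * u) by noncomm_ring, hBu,
      show D * ((B * u) * u) = D * (B * (u * u)) by noncomm_ring, hu2, mul_one]
  rw [add_mul, mul_add, mul_add, add_mul, mul_add, mul_add, k1, k2, k3, k4,
    ← mul_assoc A D, ← mul_assoc C B, hAC, hAD, hBC, hBD]
  abel

/-- even/odd decomposition relative to the odd central unitary -/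
theorem even_odd_decomp (R : VonNeumannAlgebra H) (Γ u : H →L[ℂ] H)
    (h2 : Γ * Γ = 1) (hinv : ∀ x ∈ R, Γ * x * Γ ∈ R)
    (huR : u ∈ R) (hu2 : u * u = 1) (huo : Γ * u * Γ = -u)
    {y : H →L[ℂ] H} (hy : y ∈ R) :
    ∃ a b : H →L[ℂ] H, a ∈ evenPart (R : Set (H →L[ℂ] H)) Γ ∧
      b ∈ evenPart (R : Set (H →L[ℂ] H)) Γ ∧ y = a + b * u := by
  refine ⟨(2⁻¹ : ℂ) • (y + Γ * y * Γ), ((2⁻¹ : ℂ) • (y - Γ * y * Γ)) * u, ⟨?_, ?_⟩, ⟨?_, ?_⟩, ?_⟩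
  · exact vn_smul_mem R _ (add_mem hy (hinv y hy))
  · rw [conj_smul, mul_add, add_mul, conj_conj h2]
    rw [show Γ * y * Γ + y = y + Γ * y * Γ by abel]
  · exact mul_mem (vn_smul_mem R _ (sub_mem hy (hinv y hy))) huR
  · rw [show Γ * ((2⁻¹ : ℂ) • (y - Γ * y * Γ) * u) * Γ
        = (Γ * ((2⁻¹ : ℂ) • (y - Γ * y * Γ)) * Γ) * (Γ * u * Γ) by
        rw [conj_mul' h2], huo, conj_smul, mul_sub, sub_mul, conj_conj h2]
    rw [mul_neg, ← neg_mul, ← smul_neg, neg_sub]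
  · rw [mul_assoc ((2⁻¹ : ℂ) • (y - Γ * y * Γ)) u u, hu2, mul_one]
    module

/-- the even part is a factor -/
theorem even_factor (R : VonNeumannAlgebra H) (Γ u : H →L[ℂ] H)
    (hs : star Γ = Γ) (h2 : Γ * Γ = 1) (hinv : ∀ x ∈ R, Γ * x * Γ ∈ R)
    (hcentral : centerSet (R : Set (H →L[ℂ] H)) ∩
      evenPart (R : Set (H →L[ℂ] H)) Γ = scalarOps H)
    (huR : u ∈ R) (hu2 : u * u = 1) (huo : Γ * u * Γ = -u)
    (hucomm : ∀ y ∈ R, u * y = y * u) :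
    IsFactor (evenPart (R : Set (H →L[ℂ] H)) Γ) := by
  apply Set.Subset.antisymm
  · rintro x ⟨⟨hxR, hxe⟩, hxc⟩
    rw [← hcentral]
    refine ⟨⟨hxR, fun y hy => ?_⟩, hxR, hxe⟩
    obtain ⟨a, b, ha, hb, rfl⟩ := even_odd_decomp R Γ u h2 hinv huR hu2 huo hy
    have hxa : x * a = a * x := hxc a ha
    have hxb : x * b = b * x := hxc b hb
    have hxu : u * x = x * u := hucomm x hxR
    rw [mul_add, add_mul, hxa, ← mul_assoc, hxb, mul_assoc b u x, hxu, mul_assoc,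
      ← mul_assoc b x u]
  · rintro x ⟨c, rfl⟩
    refine ⟨⟨smul_one_mem R c, ?_⟩, fun y _ => by simp [smul_mul_assoc, mul_smul_comm]⟩
    show Γ * (c • 1) * Γ = c • 1
    rw [conj_smul, mul_one, h2]


/-- abelian projections of the even part are abelian in R -/
theorem abelian_extend (R : VonNeumannAlgebra H) (Γ u : H →L[ℂ] H)
    (h2 : Γ * Γ = 1) (hinv : ∀ x ∈ R, Γ * x * Γ ∈ R)
    (huR : u ∈ R) (hu2 : u * u = 1) (huo : Γ * u * Γ = -u)
    (hucomm : ∀ y ∈ R, u * y = y * u)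
    (e : H →L[ℂ] H) (he : e ∈ evenPart (R : Set (H →L[ℂ] H)) Γ)
    (hea : AbelianProj (evenPart (R : Set (H →L[ℂ] H)) Γ) e) :
    AbelianProj (R : Set (H →L[ℂ] H)) e := by
  intro x hx y hy
  obtain ⟨a, b, ha, hb, rfl⟩ := even_odd_decomp R Γ u h2 hinv huR hu2 huo hx
  obtain ⟨c, d, hc, hd, rfl⟩ := even_odd_decomp R Γ u h2 hinv huR hu2 huo hy
  have hue : u * e = e * u := hucomm e he.1
  have corner : ∀ s t : H →L[ℂ] H, e * (s + t * u) * e = e * s * e + (e * t * e) * u := by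
    intro s t
    have : e * (t * u) * e = (e * t * e) * u := by
      rw [show e * (t * u) * e = e * t * (u * e) by noncomm_ring, hue]
      noncomm_ring
    rw [mul_add, add_mul, this]
  rw [corner a b, corner c d]
  have memA : e * a * e ∈ (R : Set (H →L[ℂ] H)) := mul_mem (mul_mem he.1 ha.1) he.1
  have memB : e * b * e ∈ (R : Set (H →L[ℂ] H)) := mul_mem (mul_mem he.1 hb.1) he.1
  have memC : e * c * e ∈ (R : Set (H →L[ℂ] H)) := mul_mem (mul_mem he.1 hc.1) he.1
  have memD : e * d * e ∈ (R : Set (H →L[ℂ] H)) := mul_mem (mul_mem he.1 hd.1) he.1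
  exact block_comm _ _ _ _ u hu2 (hucomm _ memA) (hucomm _ memB) (hucomm _ memC)
    (hucomm _ memD) (hea a ha c hc) (hea a ha d hd) (hea b hb c hc) (hea b hb d hd)


/-- the even part is type I_n -/
theorem even_typeI (R : VonNeumannAlgebra H) (Γ u : H →L[ℂ] H)
    (hs : star Γ = Γ) (h2 : Γ * Γ = 1) (hinv : ∀ x ∈ R, Γ * x * Γ ∈ R)
    (huR : u ∈ R) (hus : star u = u) (hu2 : u * u = 1) (huo : Γ * u * Γ = -u)
    (hucomm : ∀ y ∈ R, u * y = y * u)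
    (n : Cardinal) (hIn : TypeI (R : Set (H →L[ℂ] H)) n) :
    TypeI (evenPart (R : Set (H →L[ℂ] H)) Γ) n := by
  obtain ⟨ι, E, hmk, hEp, horth, heq, hsum⟩ := hIn
  set p : H →L[ℂ] H := (2⁻¹ : ℂ) • (1 + u) with hpdef
  have hpR : p ∈ R := vn_smul_mem R _ (add_mem (one_mem R) huR)
  have hpcomm : ∀ x ∈ (R : Set (H →L[ℂ] H)), p * x = x * p := by
    intro x hx
    rw [hpdef, smul_mul_assoc, mul_smul_comm, add_mul, mul_add, one_mul, mul_one, hucomm x hx]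
  have hpp : p * p = p := by
    rw [hpdef, smul_mul_smul_comm]
    have h : ((1 : H →L[ℂ] H) + u) * (1 + u) = (2:ℂ) • (1 + u) := by
      simp only [mul_add, add_mul, one_mul, mul_one, hu2]
      rw [two_smul]; abel
    rw [h, smul_smul]
    congr 1
    norm_num
  have hps : star p = p := by
    rw [hpdef, star_smul, star_add, star_one, hus]
    norm_num
  have hpe : Γ * p * Γ = 1 - p := by
    rw [hpdef, conj_smul, mul_add, add_mul, conj_one h2, huo]
    module
  set q : H →L[ℂ] H := 1 - p with hqdef
  have hqR : q ∈ R := sub_mem (one_mem R) hpR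
  have hqcomm : ∀ x ∈ (R : Set (H →L[ℂ] H)), q * x = x * q := by
    intro x hx
    rw [hqdef, sub_mul, mul_sub, one_mul, mul_one, hpcomm x hx]
  have hqq : q * q = q := by
    rw [hqdef, sub_mul, mul_sub, mul_sub, one_mul, mul_one, hpp]
    abel
  have hpq : p * q = 0 := by rw [hqdef, mul_sub, mul_one, hpp, sub_self]
  have hqp : q * p = 0 := by rw [hqdef, sub_mul, one_mul, hpp, sub_self]
  have hqs : star q = q := by rw [hqdef, star_sub, star_one, hps]
  have hqe : Γ * q * Γ = p := by
    rw [hqdef, mul_sub, sub_mul, conj_one h2, hpe, hqdef]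
    abel
  -- key product rules
  have keyL : ∀ s : H →L[ℂ] H, (∀ x ∈ (R : Set (H →L[ℂ] H)), s * x = x * s) →
      ∀ X x : H →L[ℂ] H, x ∈ (R : Set (H →L[ℂ] H)) → (X * s) * x = (X * x) * s := by
    intro s hscomm X x hx
    rw [mul_assoc, hscomm x hx, ← mul_assoc]
  have keyM : ∀ s t X Y : H →L[ℂ] H, (∀ x ∈ (R : Set (H →L[ℂ] H)), s * x = x * s) →
      Y ∈ (R : Set (H →L[ℂ] H)) → (X * s) * (Y * t) = (X * Y) * (s * t) := by
    intro s t X Y hscomm hY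
    rw [mul_assoc X s (Y * t), ← mul_assoc s Y t, hscomm Y hY, mul_assoc Y s t,
      ← mul_assoc X Y (s * t)]
  set G : ι → H →L[ℂ] H := fun a => Γ * E a * Γ with hGdef
  have hGR : ∀ a, G a ∈ R := fun a => hinv _ (hEp a).1
  set F : ι → H →L[ℂ] H := fun a => E a * p + G a * q with hFdef
  -- elements of the form X*p + (ΓXΓ)*q are even
  have heven : ∀ X ∈ (R : Set (H →L[ℂ] H)),
      X * p + (Γ * X * Γ) * q ∈ evenPart (R : Set (H →L[ℂ] H)) Γ := by
    intro X hX
    refine ⟨add_mem (mul_mem hX hpR) (mul_mem (hinv X hX) hqR), ?_⟩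
    rw [mul_add, add_mul, ← conj_mul' h2 X p, ← conj_mul' h2 (Γ * X * Γ) q,
      conj_conj h2, hpe, hqe]
    abel
  have hFmem : ∀ a, F a ∈ evenPart (R : Set (H →L[ℂ] H)) Γ := fun a => heven _ (hEp a).1
  -- corner computation
  have hFxF : ∀ a, ∀ x ∈ (R : Set (H →L[ℂ] H)),
      F a * x * F a = (E a * x * E a) * p + (G a * x * G a) * q := by
    intro a x hx
    rw [hFdef]
    simp only
    rw [add_mul, add_mul, mul_add, mul_add,
      keyL p hpcomm (E a) x hx, keyL q hqcomm (G a) x hx,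
      keyM p q (E a * x) (G a) hpcomm (hGR a), keyM p p (E a * x) (E a) hpcomm (hEp a).1,
      keyM q p (G a * x) (E a) hqcomm (hEp a).1, keyM q q (G a * x) (G a) hqcomm (hGR a),
      hpp, hqq, hpq, hqp, mul_zero, mul_zero]
    abel
  have hGxG : ∀ a, ∀ x : H →L[ℂ] H, G a * x * G a = Γ * (E a * (Γ * x * Γ) * E a) * Γ := by
    intro a x
    rw [hGdef]
    simp only
    conv_lhs => rw [← conj_conj h2 x]
    rw [conj_mul' h2 (E a) (Γ * x * Γ), conj_mul' h2 (E a * (Γ * x * Γ)) (E a)]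
  -- F a is abelian in R
  have hFab : ∀ a, AbelianProj (R : Set (H →L[ℂ] H)) (F a) := by
    intro a x hx y hy
    rw [hFxF a x hx, hFxF a y hy, add_mul, mul_add, mul_add, add_mul, mul_add, mul_add,
      keyM p p (E a * x * E a) (E a * y * E a) hpcomm
        (mul_mem (mul_mem (hEp a).1 hy) (hEp a).1),
      keyM p q (E a * x * E a) (G a * y * G a) hpcomm
        (mul_mem (mul_mem (hGR a) hy) (hGR a)),
      keyM q p (G a * x * G a) (E a * y * E a) hqcomm
        (mul_mem (mul_mem (hEp a).1 hy) (hEp a).1),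
      keyM q q (G a * x * G a) (G a * y * G a) hqcomm
        (mul_mem (mul_mem (hGR a) hy) (hGR a)),
      keyM p p (E a * y * E a) (E a * x * E a) hpcomm
        (mul_mem (mul_mem (hEp a).1 hx) (hEp a).1),
      keyM p q (E a * y * E a) (G a * x * G a) hpcomm
        (mul_mem (mul_mem (hGR a) hx) (hGR a)),
      keyM q p (G a * y * G a) (E a * x * E a) hqcomm
        (mul_mem (mul_mem (hEp a).1 hx) (hEp a).1),
      keyM q q (G a * y * G a) (G a * x * G a) hqcomm
        (mul_mem (mul_mem (hGR a) hx) (hGR a)),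
      hpp, hqq, hpq, hqp]
    simp only [mul_zero, add_zero, zero_add]
    have hcom1 : (E a * x * E a) * (E a * y * E a) = (E a * y * E a) * (E a * x * E a) :=
      (hEp a).2.2 x hx y hy
    have hcom2 : (G a * x * G a) * (G a * y * G a) = (G a * y * G a) * (G a * x * G a) := by
      rw [hGxG a x, hGxG a y, conj_mul' h2, conj_mul' h2,
        (hEp a).2.2 (Γ * x * Γ) (hinv x hx) (Γ * y * Γ) (hinv y hy)]
    rw [hcom1, hcom2]
  refine ⟨ι, F, hmk, fun a => ⟨hFmem a, ⟨?_, ?_⟩, fun x hx y hy =>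
    hFab a x hx.1 y hy.1⟩, fun a b hab => ?_, fun a b => ?_, fun v => ?_⟩
  · -- F a * F a = F a
    rw [hFdef]
    simp only
    rw [mul_add, add_mul, add_mul,
      keyM p p (E a) (E a) hpcomm (hEp a).1, keyM q p (G a) (E a) hqcomm (hEp a).1,
      keyM p q (E a) (G a) hpcomm (hGR a), keyM q q (G a) (G a) hqcomm (hGR a),
      hpp, hqq, hpq, hqp, mul_zero, mul_zero, (hEp a).2.1.1,
      show G a * G a = G a by rw [hGdef]; simp only; rw [conj_mul' h2, (hEp a).2.1.1]]
    abel
  · -- star (F a) = F a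
    rw [hFdef]
    simp only
    rw [star_add, star_mul, star_mul, hps, hqs, (hEp a).2.1.2,
      show star (G a) = G a by
        rw [hGdef]; simp only; rw [conj_star hs, (hEp a).2.1.2],
      hpcomm _ (hEp a).1, hqcomm _ (hGR a)]
  · -- orthogonality
    rw [hFdef]
    simp only
    rw [mul_add, add_mul, add_mul,
      keyM p p (E a) (E b) hpcomm (hEp b).1, keyM q p (G a) (E b) hqcomm (hEp b).1,
      keyM p q (E a) (G b) hpcomm (hGR b), keyM q q (G a) (G b) hqcomm (hGR b),
      hpp, hqq, hpq, hqp, mul_zero, mul_zero, horth hab,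
      show G a * G b = 0 by
        rw [hGdef]; simp only; rw [conj_mul' h2, horth hab, mul_zero, zero_mul],
      zero_mul, zero_mul]
    abel
  · -- equivalence
    obtain ⟨v, hvR, hv1, hv2⟩ := heq a b
    refine ⟨v * p + (Γ * v * Γ) * q, heven v hvR, ?_, ?_⟩
    · rw [star_add, star_mul, star_mul, hps, hqs, conj_star hs,
        hpcomm _ (star_mem hvR), hqcomm _ (hinv _ (star_mem hvR)),
        add_mul, mul_add, mul_add,
        keyM p p (star v) v hpcomm hvR,
        keyM p q (star v) (Γ * v * Γ) hpcomm (hinv v hvR),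
        keyM q p (Γ * star v * Γ) v hqcomm hvR,
        keyM q q (Γ * star v * Γ) (Γ * v * Γ) hqcomm (hinv v hvR),
        hpp, hqq, hpq, hqp, conj_mul' h2 (star v) v, hv1]
      simp only [mul_zero, add_zero, zero_add, hFdef, hGdef]
    · rw [star_add, star_mul, star_mul, hps, hqs, conj_star hs,
        hpcomm _ (star_mem hvR), hqcomm _ (hinv _ (star_mem hvR)),
        add_mul, mul_add, mul_add,
        keyM p p v (star v) hpcomm (star_mem hvR),
        keyM p q v (Γ * star v * Γ) hpcomm (hinv _ (star_mem hvR)),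
        keyM q p (Γ * v * Γ) (star v) hqcomm (star_mem hvR),
        keyM q q (Γ * v * Γ) (Γ * star v * Γ) hqcomm (hinv _ (star_mem hvR)),
        hpp, hqq, hpq, hqp, conj_mul' h2 v (star v), hv2]
      simp only [mul_zero, add_zero, zero_add, hFdef, hGdef]
  · -- HasSum
    have hFv : (fun a => (F a) v) = fun a => E a (p v) + Γ (E a (Γ (q v))) := by
      funext a
      simp only [hFdef, hGdef, ContinuousLinearMap.add_apply, ContinuousLinearMap.mul_apply]
    rw [hFv]
    have h1 := hsum (p v)
    have h2' := (Γ : H →L[ℂ] H).hasSum (hsum (Γ (q v)))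
    have hval : p v + Γ (Γ (q v)) = v := by
      have : Γ (Γ (q v)) = q v := by
        rw [← ContinuousLinearMap.mul_apply, h2, ContinuousLinearMap.one_apply]
      rw [this, hqdef, ContinuousLinearMap.sub_apply, ContinuousLinearMap.one_apply]
      abel
    have h3 := h1.add h2'
    rw [hval] at h3
    exact h3

end Stmt16Aux

/-- if `(R, Ad_Γ)` is central, `R` is of type I_n and not a factor, then
`R⁰` is a type I_n factor and abelian projections of `R⁰` are abelian in `R`. -/
theorem stmt_16 (R : VonNeumannAlgebra H) (Γ : H →L[ℂ] H) (hΓ : IsSAU Γ)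
    (hinv : ∀ x ∈ R, Γ * x * Γ ∈ R)
    (hcentral : centerSet (R : Set (H →L[ℂ] H)) ∩
      evenPart (R : Set (H →L[ℂ] H)) Γ = scalarOps H)
    (n : Cardinal) (hIn : TypeI (R : Set (H →L[ℂ] H)) n)
    (hnf : ¬ IsFactor (R : Set (H →L[ℂ] H))) :
    IsFactor (evenPart (R : Set (H →L[ℂ] H)) Γ) ∧
    TypeI (evenPart (R : Set (H →L[ℂ] H)) Γ) n ∧
    ∀ e ∈ evenPart (R : Set (H →L[ℂ] H)) Γ, IsProjOp e →
      AbelianProj (evenPart (R : Set (H →L[ℂ] H)) Γ) e →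
      AbelianProj (R : Set (H →L[ℂ] H)) e := by
  obtain ⟨hs, h2⟩ := hΓ
  obtain ⟨u, huR, hus, hu2, huo, hucomm⟩ :=
    Stmt16Aux.exists_odd_sau R Γ hs h2 hinv hcentral hnf
  exact ⟨Stmt16Aux.even_factor R Γ u hs h2 hinv hcentral huR hu2 huo hucomm,
    Stmt16Aux.even_typeI R Γ u hs h2 hinv huR hus hu2 huo hucomm n hIn,
    fun e he _ hea => Stmt16Aux.abelian_extend R Γ u h2 hinv huR hu2 huo hucomm e he hea⟩
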